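/- Let n ≥ 1, let v ∈ ℝⁿ, and let ω, w ∈ ℝⁿ be entrywise strictly positive. Equip ℝⁿ with ⟨f,g⟩_w = Σ_j f_j g_j w_j ω_j, write 𝟙 for the all-ones vector, v² for the entrywise square of v, and c = ⟨𝟙, v²⟩_w / ⟨𝟙, 𝟙⟩_w. Assume ⟨𝟙, v⟩_w = 0, ⟨v, v²⟩_w = 0, v ≠ 0, and v² − c𝟙 ≠ 0. Given f ∈ ℝⁿ, let ρ = Σ_j f_j ω_j, J = Σ_j f_j v_j ω_j, κ = ½Σ_j f_j v_j² ω_j, and define f₁ = (ρ/⟨𝟙,𝟙⟩_w)·(w ⋆ 𝟙) + (J/⟨v,v⟩_w)·(w ⋆ v) + ((2κ − cρ)/⟨v²−c𝟙, v²−c𝟙⟩_w)·(w ⋆ (v²−c𝟙)). Then the remainder f₂ = f − f₁ has zero discrete mass, momentum and kinetic energy: Σ_j (f₂)_j ω_j = 0, Σ_j (f₂)_j v_j ω_j = 0, and Σ_j (f₂)_j v_j² ω_j = 0. -/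

import Mathlib

open Finset

/-- In the LoMaC conservative decomposition `f = f₁ + f₂`, the remainder
`f₂ = f − f₁` has zero discrete mass, momentum and kinetic energy. -/
theorem lomac_remainder_has_zero_moments
    (n : ℕ) (hn : 1 ≤ n) (v ω w : Fin n → ℝ)
    (hω : ∀ j, 0 < ω j) (hw : ∀ j, 0 < w j)
    (c : ℝ)
    (hc : c = (∑ j, (1:ℝ) * (v j) ^ 2 * w j * ω j) / (∑ j, (1:ℝ) * (1:ℝ) * w j * ω j))
    (horth1 : ∑ j, (1:ℝ) * v j * w j * ω j = 0)
    (horth2 : ∑ j, v j * (v j) ^ 2 * w j * ω j = 0)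
    (hv0 : v ≠ 0)
    (hvc0 : (fun j => (v j) ^ 2 - c * 1) ≠ (0 : Fin n → ℝ))
    (f : Fin n → ℝ) (ρ J κ : ℝ)
    (hρ : ρ = ∑ j, f j * ω j)
    (hJ : J = ∑ j, f j * v j * ω j)
    (hκ : κ = (1/2) * ∑ j, f j * (v j) ^ 2 * ω j)
    (f₁ f₂ : Fin n → ℝ)
    (hf₁ : ∀ j, f₁ j =
      (ρ / (∑ i, (1:ℝ) * (1:ℝ) * w i * ω i)) * (w j * 1)
      + (J / (∑ i, v i * v i * w i * ω i)) * (w j * v j)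
      + ((2 * κ - c * ρ)
          / (∑ i, ((v i) ^ 2 - c * 1) * ((v i) ^ 2 - c * 1) * w i * ω i))
        * (w j * ((v j) ^ 2 - c * 1)))
    (hf₂ : ∀ j, f₂ j = f j - f₁ j) :
    (∑ j, f₂ j * ω j = 0) ∧
    (∑ j, f₂ j * v j * ω j = 0) ∧
    (∑ j, f₂ j * (v j) ^ 2 * ω j = 0) := by
  set A := ∑ i, (1:ℝ) * (1:ℝ) * w i * ω i with hAdef
  set B := ∑ i, v i * v i * w i * ω i with hBdef
  set C := ∑ i, ((v i) ^ 2 - c * 1) * ((v i) ^ 2 - c * 1) * w i * ω i with hCdef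
  have hA : 0 < A := by
    apply Finset.sum_pos (fun i _ => ?_) ⟨⟨0, hn⟩, Finset.mem_univ _⟩
    simpa using mul_pos (hw i) (hω i)
  have hB : 0 < B := by
    obtain ⟨j, hj⟩ : ∃ j, v j ≠ 0 := by
      by_contra h; push_neg at h; exact hv0 (funext h)
    apply Finset.sum_pos'
    · intro i _
      exact mul_nonneg (mul_nonneg (mul_self_nonneg _) (hw i).le) (hω i).le
    · exact ⟨j, Finset.mem_univ _,
        mul_pos (mul_pos (mul_self_pos.mpr hj) (hw j)) (hω j)⟩
  have hC : 0 < C := by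
    obtain ⟨j, hj⟩ : ∃ j, (v j) ^ 2 - c * 1 ≠ 0 := by
      by_contra h; push_neg at h; exact hvc0 (funext h)
    apply Finset.sum_pos'
    · intro i _
      exact mul_nonneg (mul_nonneg (mul_self_nonneg _) (hw i).le) (hω i).le
    · exact ⟨j, Finset.mem_univ _,
        mul_pos (mul_pos (mul_self_pos.mpr hj) (hw j)) (hω j)⟩
  -- basic sums
  have S1 : ∑ j, w j * ω j = A := by
    rw [hAdef]; apply Finset.sum_congr rfl; intros; ring
  have S2 : ∑ j, v j * w j * ω j = 0 := by
    rw [← horth1]; apply Finset.sum_congr rfl; intros; ring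
  have S3 : ∑ j, (v j) ^ 2 * w j * ω j = c * A := by
    have h := hc
    rw [eq_div_iff hA.ne'] at h
    rw [h]; apply Finset.sum_congr rfl; intros; ring
  have S4 : ∑ j, v j * (v j) ^ 2 * w j * ω j = 0 := horth2
  have S5 : ∑ j, ((v j) ^ 2 - c * 1) * w j * ω j = 0 := by
    have : ∑ j, ((v j) ^ 2 - c * 1) * w j * ω j
        = (∑ j, (v j) ^ 2 * w j * ω j) - c * ∑ j, w j * ω j := by
      rw [Finset.mul_sum, ← Finset.sum_sub_distrib]
      apply Finset.sum_congr rfl; intros; ring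
    rw [this, S3, S1]; ring
  have S6 : ∑ j, v j * ((v j) ^ 2 - c * 1) * w j * ω j = 0 := by
    have : ∑ j, v j * ((v j) ^ 2 - c * 1) * w j * ω j
        = (∑ j, v j * (v j) ^ 2 * w j * ω j) - c * ∑ j, v j * w j * ω j := by
      rw [Finset.mul_sum, ← Finset.sum_sub_distrib]
      apply Finset.sum_congr rfl; intros; ring
    rw [this, S4, S2]; ring
  have S7 : ∑ j, (v j) ^ 2 * ((v j) ^ 2 - c * 1) * w j * ω j = C := by
    have : ∑ j, (v j) ^ 2 * ((v j) ^ 2 - c * 1) * w j * ω j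
        = C + c * ∑ j, ((v j) ^ 2 - c * 1) * w j * ω j := by
      rw [hCdef, Finset.mul_sum, ← Finset.sum_add_distrib]
      apply Finset.sum_congr rfl; intros; ring
    rw [this, S5]; ring
  -- moments of f₁
  have M1 : ∑ j, f₁ j * ω j = ρ := by
    have e : ∑ j, f₁ j * ω j
        = (ρ / A) * (∑ j, w j * ω j) + (J / B) * (∑ j, v j * w j * ω j)
          + ((2 * κ - c * ρ) / C) * (∑ j, ((v j) ^ 2 - c * 1) * w j * ω j) := by
      simp only [hf₁, Finset.mul_sum, ← Finset.sum_add_distrib]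
      apply Finset.sum_congr rfl; intros; ring
    rw [e, S1, S2, S5]
    field_simp
    ring
  have M2 : ∑ j, f₁ j * v j * ω j = J := by
    have e : ∑ j, f₁ j * v j * ω j
        = (ρ / A) * (∑ j, v j * w j * ω j) + (J / B) * (∑ j, v j * v j * w j * ω j)
          + ((2 * κ - c * ρ) / C) * (∑ j, v j * ((v j) ^ 2 - c * 1) * w j * ω j) := by
      simp only [hf₁, Finset.mul_sum, ← Finset.sum_add_distrib]
      apply Finset.sum_congr rfl; intros; ring
    rw [e, S2, S6, ← hBdef]
    field_simp
    ring
  have M3 : ∑ j, f₁ j * (v j) ^ 2 * ω j = 2 * κ := by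
    have e : ∑ j, f₁ j * (v j) ^ 2 * ω j
        = (ρ / A) * (∑ j, (v j) ^ 2 * w j * ω j)
          + (J / B) * (∑ j, v j * (v j) ^ 2 * w j * ω j)
          + ((2 * κ - c * ρ) / C) * (∑ j, (v j) ^ 2 * ((v j) ^ 2 - c * 1) * w j * ω j) := by
      simp only [hf₁, Finset.mul_sum, ← Finset.sum_add_distrib]
      apply Finset.sum_congr rfl; intros; ring
    rw [e, S3, S4, S7]
    field_simp
    ring
  refine ⟨?_, ?_, ?_⟩
  · have : ∑ j, f₂ j * ω j = (∑ j, f j * ω j) - ∑ j, f₁ j * ω j := by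
      rw [← Finset.sum_sub_distrib]
      apply Finset.sum_congr rfl; intros; rw [hf₂]; ring
    rw [this, M1, hρ]; ring
  · have : ∑ j, f₂ j * v j * ω j = (∑ j, f j * v j * ω j) - ∑ j, f₁ j * v j * ω j := by
      rw [← Finset.sum_sub_distrib]
      apply Finset.sum_congr rfl; intros; rw [hf₂]; ring
    rw [this, M2, hJ]; ring
  · have : ∑ j, f₂ j * (v j) ^ 2 * ω j
        = (∑ j, f j * (v j) ^ 2 * ω j) - ∑ j, f₁ j * (v j) ^ 2 * ω j := by
      rw [← Finset.sum_sub_distrib]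
      apply Finset.sum_congr rfl; intros; rw [hf₂]; ring
    rw [this, M3, hκ]; ring
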